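/- Let R be a commutative ring and M a finitely generated projective R-module whose rank at every prime of R equals 2. Then the R-linear map from M to Hom_R(M, ⋀²_R M) sending m to the map n ↦ m ∧ n is bijective; that is, the canonical alternating pairing M × M → ⋀²_R M, (m,n) ↦ m ∧ n, is a perfect pairing. -/

import Mathlib

set_option maxSynthPendingDepth 3
set_option linter.unusedSectionVars false


open ExteriorAlgebra

variable (R M : Type*) [CommRing R] [AddCommGroup M] [Module R M]

/-- The wedge `ι m * ι n` of two elements of `M` lies in the second exterior power
`⋀[R]^2 M` (viewed as a submodule of the exterior algebra). -/
theorem wedge_mem (m n : M) : ι R m * ι R n ∈ ⋀[R]^2 M := by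
  have h := ExteriorAlgebra.ιMulti_range R 2 (M := M) (Set.mem_range_self ![m, n])
  have e : ExteriorAlgebra.ιMulti R 2 ![m, n] = ι R m * ι R n := by
    rw [ExteriorAlgebra.ιMulti_apply]
    simp [List.ofFn_succ]
  rwa [e] at h

/-- The canonical alternating pairing `M × M → ⋀²_R M`, `(m, n) ↦ m ∧ n`, packaged as an
`R`-bilinear map, i.e. as the `R`-linear map `M → Hom_R(M, ⋀²_R M)` sending `m` to
`n ↦ m ∧ n`. -/
noncomputable def wedgePairing : M →ₗ[R] M →ₗ[R] (⋀[R]^2 M : Submodule R (ExteriorAlgebra R M)) where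
  toFun m :=
    LinearMap.codRestrict (⋀[R]^2 M)
      ((LinearMap.mul R (ExteriorAlgebra R M) (ι R m)).comp (ι R))
      (fun n => wedge_mem R M m n)
  map_add' m m' := by
    ext n
    simp [add_mul]
    rfl
  map_smul' r m := by
    ext n
    simp
    rfl

@[simp] lemma wedgePairing_coe (m n : M) :
    (wedgePairing R M m n : ExteriorAlgebra R M) = ι R m * ι R n := rfl

lemma ιMulti_two (m n : M) : ExteriorAlgebra.ιMulti R 2 ![m, n] = ι R m * ι R n := by
  rw [ExteriorAlgebra.ιMulti_apply]
  simp [List.ofFn_succ]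

/-- wedges span the second exterior power -/
lemma span_wedges :
    Submodule.span R {l : (⋀[R]^2 M : Submodule R (ExteriorAlgebra R M)) |
      ∃ m n, l = wedgePairing R M m n} = ⊤ := by
  apply Submodule.map_injective_of_injective (Submodule.injective_subtype (⋀[R]^2 M))
  rw [Submodule.map_span, Submodule.map_top, Submodule.range_subtype]
  have : (⋀[R]^2 M).subtype '' {l | ∃ m n, l = wedgePairing R M m n}
      = Set.range (ExteriorAlgebra.ιMulti R 2 (M := M)) := by
    ext v
    constructor
    · rintro ⟨l, ⟨m, n, rfl⟩, rfl⟩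
      exact ⟨![m, n], ιMulti_two R M m n⟩
    · rintro ⟨w, rfl⟩
      refine ⟨wedgePairing R M (w 0) (w 1), ⟨w 0, w 1, rfl⟩, ?_⟩
      simp only [Submodule.coe_subtype, wedgePairing_coe]
      rw [← ιMulti_two]
      congr 1
      ext i
      fin_cases i <;> rfl
  rw [this, ExteriorAlgebra.ιMulti_span_fixedDegree]

section Local

variable (S : Submonoid R)

local notation "Rₛ" => Localization S
local notation "Mₛ" => LocalizedModule S M
local notation "L" => (⋀[R]^2 M : Submodule R (ExteriorAlgebra R M))

variable (b : Module.Basis (Fin 2) (Localization S) (LocalizedModule S M))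

/-- coordinate determinant as an `R`-alternating form on `M` with values in `Rₛ`. -/
noncomputable def coordDet : M [⋀^Fin 2]→ₗ[R] Localization S where
  toMultilinearMap := (MultilinearMap.restrictScalars R b.det.toMultilinearMap).compLinearMap
      (fun _ => LocalizedModule.mkLinearMap S M)
  map_eq_zero_of_eq' := fun v i j h hij =>
    b.det.map_eq_zero_of_eq (fun k => LocalizedModule.mkLinearMap S M (v k)) (by simp [h]) hij

/-- the induced functional on the second exterior power. -/
noncomputable def coordDelta : L →ₗ[R] Localization S :=
  (ExteriorAlgebra.liftAlternating
    (fun i => match i with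
      | 2 => coordDet R M S b
      | _ => 0)) ∘ₗ (Submodule.subtype _)

lemma coordDelta_wedge (m n : M) :
    coordDelta R M S b (wedgePairing R M m n) = coordDet R M S b ![m, n] := by
  have : ((wedgePairing R M m n : L) : ExteriorAlgebra R M)
      = ExteriorAlgebra.ιMulti R 2 ![m, n] := (ιMulti_two R M m n).symm
  simp only [coordDelta, LinearMap.comp_apply, Submodule.subtype_apply, this,
    ExteriorAlgebra.liftAlternating_apply_ιMulti]

lemma coordDet_apply (m n : M) :
    coordDet R M S b ![m, n] =
      b.repr (LocalizedModule.mkLinearMap S M m) 0 * b.repr (LocalizedModule.mkLinearMap S M n) 1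
      - b.repr (LocalizedModule.mkLinearMap S M n) 0
        * b.repr (LocalizedModule.mkLinearMap S M m) 1 := by
  show b.det (fun k => LocalizedModule.mkLinearMap S M (![m,n] k)) = _
  rw [Module.Basis.det_apply, Matrix.det_fin_two]
  simp [Module.Basis.toMatrix_apply]

variable [Module.FinitePresentation R M]

/-- The localization of the wedge pairing. -/
noncomputable def locPairing : Mₛ →ₗ[R] (Mₛ →ₗ[R] LocalizedModule S L) :=
  IsLocalizedModule.map S (LocalizedModule.mkLinearMap S M)
    (IsLocalizedModule.map S (LocalizedModule.mkLinearMap S M)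
      (LocalizedModule.mkLinearMap S L))
    (wedgePairing R M)

lemma locPairing_mk (m n : M) :
    locPairing R M S (LocalizedModule.mkLinearMap S M m) (LocalizedModule.mkLinearMap S M n)
      = LocalizedModule.mkLinearMap S L (wedgePairing R M m n) := by
  rw [locPairing, IsLocalizedModule.map_apply, IsLocalizedModule.map_apply]

lemma locPairing_smul_left (c : Localization S) (x y : Mₛ) :
    locPairing R M S (c • x) y = c • locPairing R M S x y := by
  exact LinearMap.congr_fun (map_smul ((locPairing R M S).extendScalarsOfIsLocalization S
    (Localization S)) c x) y

lemma locPairing_smul_right (c : Localization S) (x y : Mₛ) :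
    locPairing R M S x (c • y) = c • locPairing R M S x y :=
  map_smul ((locPairing R M S x).extendScalarsOfIsLocalization S (Localization S)) c y

lemma locPairing_self (x : Mₛ) : locPairing R M S x x = 0 := by
  obtain ⟨⟨m, s⟩, hs⟩ := IsLocalizedModule.surj S (LocalizedModule.mkLinearMap S M) x
  have h2 : locPairing R M S (s • x) (s • x) = 0 := by
    rw [hs, locPairing_mk]
    have : wedgePairing R M m m = 0 := by
      ext
      simp
    rw [this, map_zero]
  have h3 : (s : R) • ((s : R) • locPairing R M S x x) = 0 := by
    simp only [Submonoid.smul_def, map_smul, LinearMap.smul_apply] at h2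
    exact h2
  have hinj : ∀ z : LocalizedModule S L, (s : R) • z = 0 → z = 0 := by
    intro z hz
    have hb := ((Module.End.isUnit_iff _).mp
      (IsLocalizedModule.map_units (LocalizedModule.mkLinearMap S L) s)).injective
    apply hb
    simp only [Module.algebraMap_end_apply, smul_zero, hz, map_zero]
  exact hinj _ (hinj _ h3)

lemma locPairing_skew (x y : Mₛ) : locPairing R M S x y = - locPairing R M S y x := by
  have h := locPairing_self R M S (x + y)
  simp only [map_add, LinearMap.add_apply, locPairing_self R M S x, locPairing_self R M S y,
    zero_add, add_zero] at h
  exact eq_neg_of_add_eq_zero_right h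

lemma locPairing_expand (x y : Mₛ) :
    locPairing R M S x y =
      (b.repr x 0 * b.repr y 1 - b.repr x 1 * b.repr y 0) •
        locPairing R M S (b 0) (b 1) := by
  have hx := b.sum_repr x
  have hy := b.sum_repr y
  rw [Fin.sum_univ_two] at hx hy
  conv_lhs => rw [← hx, ← hy]
  simp only [map_add, LinearMap.add_apply, locPairing_smul_left, locPairing_smul_right,
    locPairing_self, smul_zero, zero_add, add_zero,
    locPairing_skew R M S (b 1) (b 0), locPairing_self, neg_zero]
  simp only [smul_neg, smul_smul, sub_smul]
  rw [mul_comm (b.repr y 0) (b.repr x 1), mul_comm (b.repr y 1) (b.repr x 0)]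
  abel

/-- the functional on the localized second exterior power induced by the coordinate
determinant. -/
noncomputable def deltaS : LocalizedModule S L →ₗ[Localization S] Localization S :=
  (IsLocalizedModule.lift S (LocalizedModule.mkLinearMap S L) (coordDelta R M S b)
    (IsLocalizedModule.map_units (Algebra.linearMap R (Localization S)))
    ).extendScalarsOfIsLocalization S (Localization S)

lemma deltaS_mk (l : L) :
    deltaS R M S b (LocalizedModule.mkLinearMap S L l) = coordDelta R M S b l := by
  simpa [deltaS] using IsLocalizedModule.lift_apply S (LocalizedModule.mkLinearMap S L)
    (coordDelta R M S b)
    (IsLocalizedModule.map_units (Algebra.linearMap R (Localization S))) l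

lemma deltaS_omega :
    deltaS R M S b (locPairing R M S (b 0) (b 1)) = 1 := by
  obtain ⟨⟨m₀, s₀⟩, h₀⟩ := IsLocalizedModule.surj S (LocalizedModule.mkLinearMap S M) (b 0)
  obtain ⟨⟨m₁, s₁⟩, h₁⟩ := IsLocalizedModule.surj S (LocalizedModule.mkLinearMap S M) (b 1)
  have h₀' : LocalizedModule.mkLinearMap S M m₀ = algebraMap R (Localization S) s₀ • b 0 := by
    rw [← h₀, Submonoid.smul_def, algebraMap_smul]
  have h₁' : LocalizedModule.mkLinearMap S M m₁ = algebraMap R (Localization S) s₁ • b 1 := by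
    rw [← h₁, Submonoid.smul_def, algebraMap_smul]
  have hr₀ : b.repr (LocalizedModule.mkLinearMap S M m₀)
      = algebraMap R (Localization S) s₀ • Finsupp.single 0 1 := by
    rw [h₀', map_smul, b.repr_self]
  have hr₁ : b.repr (LocalizedModule.mkLinearMap S M m₁)
      = algebraMap R (Localization S) s₁ • Finsupp.single 1 1 := by
    rw [h₁', map_smul, b.repr_self]
  set a₀ := algebraMap R (Localization S) s₀
  set a₁ := algebraMap R (Localization S) s₁
  have key : locPairing R M S (LocalizedModule.mkLinearMap S M m₀)
      (LocalizedModule.mkLinearMap S M m₁)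
      = (a₀ * a₁) • locPairing R M S (b 0) (b 1) := by
    rw [locPairing_expand R M S b, hr₀, hr₁]
    simp
  have hdet : coordDelta R M S b (wedgePairing R M m₀ m₁) = a₀ * a₁ := by
    rw [coordDelta_wedge, coordDet_apply, hr₀, hr₁]
    simp
  have := congrArg (deltaS R M S b) key
  rw [locPairing_mk, deltaS_mk, hdet, map_smul, smul_eq_mul] at this
  have hu : IsUnit (a₀ * a₁) :=
    ((IsLocalization.map_units (Localization S) s₀).mul
      (IsLocalization.map_units (Localization S) s₁))
  exact (hu.mul_left_cancel (by rw [mul_one, ← this])).symm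

lemma smul_omega_eq_zero {c : Localization S} (hc : c • locPairing R M S (b 0) (b 1) = 0) :
    c = 0 := by
  have := congrArg (deltaS R M S b) hc
  rw [map_smul, deltaS_omega, smul_eq_mul, mul_one, map_zero] at this
  exact this

lemma exists_smul_omega (z : LocalizedModule S L) :
    ∃ c : Localization S, z = c • locPairing R M S (b 0) (b 1) := by
  obtain ⟨⟨l, s⟩, hs⟩ := IsLocalizedModule.surj S (LocalizedModule.mkLinearMap S L) z
  have hgen : ∀ l : L, ∃ c : Localization S,
      LocalizedModule.mkLinearMap S L l = c • locPairing R M S (b 0) (b 1) := by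
    intro l
    have hl : l ∈ Submodule.span R {l : L | ∃ m n, l = wedgePairing R M m n} := by
      rw [span_wedges]; trivial
    induction hl using Submodule.span_induction with
    | mem l h =>
      obtain ⟨m, n, rfl⟩ := h
      refine ⟨b.repr (LocalizedModule.mkLinearMap S M m) 0
          * b.repr (LocalizedModule.mkLinearMap S M n) 1
          - b.repr (LocalizedModule.mkLinearMap S M m) 1
          * b.repr (LocalizedModule.mkLinearMap S M n) 0, ?_⟩
      rw [← locPairing_mk, locPairing_expand R M S b]
    | zero => exact ⟨0, by simp⟩
    | add x y _ _ hx hy =>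
      obtain ⟨cx, hcx⟩ := hx
      obtain ⟨cy, hcy⟩ := hy
      exact ⟨cx + cy, by rw [map_add, hcx, hcy, add_smul]⟩
    | smul r x _ hx =>
      obtain ⟨cx, hcx⟩ := hx
      exact ⟨r • cx, by rw [map_smul, hcx, smul_assoc]⟩
  obtain ⟨c, hc⟩ := hgen l
  have hu := IsLocalization.map_units (Localization S) s
  refine ⟨((hu.unit⁻¹ : Units (Localization S)) : Localization S) * c, ?_⟩
  have hz : algebraMap R (Localization S) (s : R) • z
      = c • locPairing R M S (b 0) (b 1) := by
    rw [algebraMap_smul, ← hc, ← hs, Submonoid.smul_def]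
  calc z = (1 : Localization S) • z := (one_smul _ _).symm
    _ = (((hu.unit⁻¹ : Units (Localization S)) : Localization S)
          * algebraMap R (Localization S) (s : R)) • z := by rw [IsUnit.val_inv_mul]
    _ = ((hu.unit⁻¹ : Units (Localization S)) : Localization S)
          • (algebraMap R (Localization S) (s : R) • z) := by rw [mul_smul]
    _ = _ := by rw [hz, smul_smul]

include b in
theorem locPairing_bijective : Function.Bijective (locPairing R M S) := by
  constructor
  · rw [injective_iff_map_eq_zero]
    intro x hx
    have h0 : b.repr x 0 • locPairing R M S (b 0) (b 1) = 0 := by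
      have hex := locPairing_expand R M S b x (b 1)
      rw [hx, LinearMap.zero_apply, Module.Basis.repr_self] at hex
      rw [Finsupp.single_eq_same, Finsupp.single_eq_of_ne (by decide : (0 : Fin 2) ≠ 1),
        mul_one, mul_zero, sub_zero] at hex
      exact hex.symm
    have h1 : b.repr x 1 • locPairing R M S (b 0) (b 1) = 0 := by
      have hex := locPairing_expand R M S b x (b 0)
      rw [hx, LinearMap.zero_apply, Module.Basis.repr_self] at hex
      rw [Finsupp.single_eq_same, Finsupp.single_eq_of_ne (by decide : (1 : Fin 2) ≠ 0),
        mul_one, mul_zero, zero_sub, neg_smul] at hex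
      exact neg_eq_zero.mp hex.symm
    apply b.ext_elem
    intro i
    fin_cases i
    · rw [map_zero, Finsupp.coe_zero, Pi.zero_apply]
      exact smul_omega_eq_zero R M S b h0
    · rw [map_zero, Finsupp.coe_zero, Pi.zero_apply]
      exact smul_omega_eq_zero R M S b h1
  · intro φ
    obtain ⟨c₀, hc₀⟩ := exists_smul_omega R M S b (φ (b 0))
    obtain ⟨c₁, hc₁⟩ := exists_smul_omega R M S b (φ (b 1))
    refine ⟨c₁ • b 0 - c₀ • b 1, ?_⟩
    have h0 : locPairing R M S (c₁ • b 0 - c₀ • b 1) (b 0) = φ (b 0) := by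
      rw [map_sub, LinearMap.sub_apply, locPairing_smul_left, locPairing_smul_left,
        locPairing_self, locPairing_skew R M S (b 1) (b 0), smul_zero, zero_sub, smul_neg,
        neg_neg, hc₀]
    have h1 : locPairing R M S (c₁ • b 0 - c₀ • b 1) (b 1) = φ (b 1) := by
      rw [map_sub, LinearMap.sub_apply, locPairing_smul_left, locPairing_smul_left,
        locPairing_self, smul_zero, sub_zero, hc₁]
    have hext : ((locPairing R M S (c₁ • b 0 - c₀ • b 1)).extendScalarsOfIsLocalization S
          (Localization S))
        = (φ.extendScalarsOfIsLocalization S (Localization S)) := by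
      apply b.ext
      intro i
      fin_cases i
      · simpa using h0
      · simpa using h1
    have := congrArg (LinearMap.restrictScalars R) hext
    rwa [LinearMap.restrictScalars_extendScalarsOfIsLocalization,
      LinearMap.restrictScalars_extendScalarsOfIsLocalization] at this

end Local

/-- Let `R` be a commutative ring and `M` a finitely generated projective
`R`-module whose rank at every prime of `R` equals `2`. Then the `R`-linear map
`M → Hom_R(M, ⋀²_R M)`, `m ↦ (n ↦ m ∧ n)`, is bijective: the canonical alternating pairing
`(m, n) ↦ m ∧ n` is a perfect pairing. -/
theorem wedgePairing_bijective [Module.Finite R M] [Module.Projective R M]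
    (hrank : ∀ p : PrimeSpectrum R, Module.rankAtStalk M p = 2) :
    Function.Bijective (wedgePairing R M) := by
  haveI : Module.FinitePresentation R M := Module.finitePresentation_of_projective R M
  apply bijective_of_isLocalized_maximal
    (fun P _ => LocalizedModule P.primeCompl M)
    (fun P _ => LocalizedModule.mkLinearMap P.primeCompl M)
    (fun P _ => LocalizedModule P.primeCompl M →ₗ[R]
      LocalizedModule P.primeCompl (⋀[R]^2 M : Submodule R (ExteriorAlgebra R M)))
    (fun P _ => IsLocalizedModule.map P.primeCompl
      (LocalizedModule.mkLinearMap P.primeCompl M)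
      (LocalizedModule.mkLinearMap P.primeCompl (⋀[R]^2 M : Submodule R (ExteriorAlgebra R M))))
  intro P hP
  haveI : P.IsPrime := hP.isPrime
  let p : PrimeSpectrum R := ⟨P, inferInstance⟩
  haveI : Module.Finite (Localization.AtPrime P) (LocalizedModule P.primeCompl M) :=
    Module.Finite.of_isLocalizedModule P.primeCompl (LocalizedModule.mkLinearMap P.primeCompl M)
  haveI : Module.Free (Localization.AtPrime P) (LocalizedModule P.primeCompl M) := by
    have h := Module.freeLocus_eq_univ (R := R) (M := M)
    exact Module.mem_freeLocus.mp (h ▸ Set.mem_univ p)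
  have b : Module.Basis (Fin 2) (Localization P.primeCompl) (LocalizedModule P.primeCompl M) :=
    Module.finBasisOfFinrankEq _ _ (hrank p)
  exact locPairing_bijective R M P.primeCompl b
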